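/- (Regression-based formulation.) Under the rank condition, let V̂ := MY and Ẑ := [Y, X₁, V̂] (a T×(2G+k₁) matrix, which has full column rank under the rank condition), and let Ȳ := [Y, X₁]. Then the difference between the restricted and unrestricted residual sums of squares in the augmented regression satisfies yᵀM̄[Ȳ]y − yᵀM̄[Ẑ]y = T·yᵀΨ₀y = T·(β̃−β̂)ᵀΔ̂⁻¹(β̃−β̂); moreover yᵀM̄[Ȳ]y = T·yᵀΛ₄y and yᵀM̄[Ẑ]y = T·yᵀΛ₂y. -/

import Mathlib

open Matrix

variable {T G k₁ k₂ : ℕ}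

/-- Orthogonal projection `P̄[A] = A(AᵀA)⁻¹Aᵀ` onto the column space of `A`. -/
noncomputable def projM {n : Type*} [Fintype n] [DecidableEq n]
    (A : Matrix (Fin T) n ℝ) : Matrix (Fin T) (Fin T) ℝ :=
  A * (Aᵀ * A)⁻¹ * Aᵀ

/-- The annihilator `M̄[A] = I - P̄[A]`. -/
noncomputable def annM {n : Type*} [Fintype n] [DecidableEq n]
    (A : Matrix (Fin T) n ℝ) : Matrix (Fin T) (Fin T) ℝ :=
  1 - projM A

noncomputable def M1 (X₁ : Matrix (Fin T) (Fin k₁) ℝ) : Matrix (Fin T) (Fin T) ℝ :=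
  annM X₁

noncomputable def Pm (X₁ : Matrix (Fin T) (Fin k₁) ℝ) (X₂ : Matrix (Fin T) (Fin k₂) ℝ) :
    Matrix (Fin T) (Fin T) ℝ :=
  projM (fromCols X₁ X₂)

noncomputable def Mm (X₁ : Matrix (Fin T) (Fin k₁) ℝ) (X₂ : Matrix (Fin T) (Fin k₂) ℝ) :
    Matrix (Fin T) (Fin T) ℝ :=
  annM (fromCols X₁ X₂)

noncomputable def N1 (X₁ : Matrix (Fin T) (Fin k₁) ℝ) (X₂ : Matrix (Fin T) (Fin k₂) ℝ) :
    Matrix (Fin T) (Fin T) ℝ :=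
  M1 X₁ * Pm X₁ X₂

noncomputable def B1 (Y : Matrix (Fin T) (Fin G) ℝ) (X₁ : Matrix (Fin T) (Fin k₁) ℝ) :
    Matrix (Fin G) (Fin T) ℝ :=
  (Yᵀ * M1 X₁ * Y)⁻¹ * (Yᵀ * M1 X₁)

noncomputable def B2 (Y : Matrix (Fin T) (Fin G) ℝ) (X₁ : Matrix (Fin T) (Fin k₁) ℝ)
    (X₂ : Matrix (Fin T) (Fin k₂) ℝ) : Matrix (Fin G) (Fin T) ℝ :=
  (Yᵀ * N1 X₁ X₂ * Y)⁻¹ * (Yᵀ * N1 X₁ X₂)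

noncomputable def C1 (Y : Matrix (Fin T) (Fin G) ℝ) (X₁ : Matrix (Fin T) (Fin k₁) ℝ)
    (X₂ : Matrix (Fin T) (Fin k₂) ℝ) : Matrix (Fin G) (Fin T) ℝ :=
  B2 Y X₁ X₂ - B1 Y X₁

/-- OLS estimator `β̂`. -/
noncomputable def betaOLS (y : Fin T → ℝ) (Y : Matrix (Fin T) (Fin G) ℝ)
    (X₁ : Matrix (Fin T) (Fin k₁) ℝ) : Fin G → ℝ :=
  B1 Y X₁ *ᵥ y

/-- 2SLS estimator `β̃`. -/
noncomputable def beta2S (y : Fin T → ℝ) (Y : Matrix (Fin T) (Fin G) ℝ)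
    (X₁ : Matrix (Fin T) (Fin k₁) ℝ) (X₂ : Matrix (Fin T) (Fin k₂) ℝ) : Fin G → ℝ :=
  B2 Y X₁ X₂ *ᵥ y

noncomputable def OmIV (Y : Matrix (Fin T) (Fin G) ℝ) (X₁ : Matrix (Fin T) (Fin k₁) ℝ)
    (X₂ : Matrix (Fin T) (Fin k₂) ℝ) : Matrix (Fin G) (Fin G) ℝ :=
  (T : ℝ)⁻¹ • (Yᵀ * N1 X₁ X₂ * Y)

noncomputable def OmLS (Y : Matrix (Fin T) (Fin G) ℝ) (X₁ : Matrix (Fin T) (Fin k₁) ℝ) :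
    Matrix (Fin G) (Fin G) ℝ :=
  (T : ℝ)⁻¹ • (Yᵀ * M1 X₁ * Y)

noncomputable def SigV (Y : Matrix (Fin T) (Fin G) ℝ) (X₁ : Matrix (Fin T) (Fin k₁) ℝ)
    (X₂ : Matrix (Fin T) (Fin k₂) ℝ) : Matrix (Fin G) (Fin G) ℝ :=
  (T : ℝ)⁻¹ • (Yᵀ * Mm X₁ X₂ * Y)

noncomputable def Dhat (Y : Matrix (Fin T) (Fin G) ℝ) (X₁ : Matrix (Fin T) (Fin k₁) ℝ)
    (X₂ : Matrix (Fin T) (Fin k₂) ℝ) : Matrix (Fin G) (Fin G) ℝ :=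
  (OmIV Y X₁ X₂)⁻¹ - (OmLS Y X₁)⁻¹

noncomputable def Psi0 (Y : Matrix (Fin T) (Fin G) ℝ) (X₁ : Matrix (Fin T) (Fin k₁) ℝ)
    (X₂ : Matrix (Fin T) (Fin k₂) ℝ) : Matrix (Fin T) (Fin T) ℝ :=
  (C1 Y X₁ X₂)ᵀ * (Dhat Y X₁ X₂)⁻¹ * C1 Y X₁ X₂

noncomputable def N2 (Y : Matrix (Fin T) (Fin G) ℝ) (X₁ : Matrix (Fin T) (Fin k₁) ℝ)
    (X₂ : Matrix (Fin T) (Fin k₂) ℝ) : Matrix (Fin T) (Fin T) ℝ :=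
  1 - M1 X₁ * Y * B2 Y X₁ X₂

noncomputable def Lam1 (Y : Matrix (Fin T) (Fin G) ℝ) (X₁ : Matrix (Fin T) (Fin k₁) ℝ)
    (X₂ : Matrix (Fin T) (Fin k₂) ℝ) : Matrix (Fin T) (Fin T) ℝ :=
  (T : ℝ)⁻¹ • (N1 X₁ X₂ * annM (N1 X₁ X₂ * Y) * N1 X₁ X₂)

noncomputable def Lam2 (Y : Matrix (Fin T) (Fin G) ℝ) (X₁ : Matrix (Fin T) (Fin k₁) ℝ)
    (X₂ : Matrix (Fin T) (Fin k₂) ℝ) : Matrix (Fin T) (Fin T) ℝ :=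
  M1 X₁ * ((T : ℝ)⁻¹ • annM (M1 X₁ * Y) - Psi0 Y X₁ X₂) * M1 X₁

noncomputable def Lam3 (Y : Matrix (Fin T) (Fin G) ℝ) (X₁ : Matrix (Fin T) (Fin k₁) ℝ)
    (X₂ : Matrix (Fin T) (Fin k₂) ℝ) : Matrix (Fin T) (Fin T) ℝ :=
  (T : ℝ)⁻¹ • (M1 X₁ * (N2 Y X₁ X₂)ᵀ * N2 Y X₁ X₂ * M1 X₁)

noncomputable def Lam4 (Y : Matrix (Fin T) (Fin G) ℝ) (X₁ : Matrix (Fin T) (Fin k₁) ℝ) :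
    Matrix (Fin T) (Fin T) ℝ :=
  (T : ℝ)⁻¹ • (M1 X₁ * annM (M1 X₁ * Y) * M1 X₁)

def Ybar (Y : Matrix (Fin T) (Fin G) ℝ) (X₁ : Matrix (Fin T) (Fin k₁) ℝ) :
    Matrix (Fin T) (Fin G ⊕ Fin k₁) ℝ :=
  fromCols Y X₁

def Zfull (Y : Matrix (Fin T) (Fin G) ℝ) (X₁ : Matrix (Fin T) (Fin k₁) ℝ)
    (X₂ : Matrix (Fin T) (Fin k₂) ℝ) : Matrix (Fin T) (Fin G ⊕ (Fin k₁ ⊕ Fin k₂)) ℝ :=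
  fromCols Y (fromCols X₁ X₂)

noncomputable def PsiR (Y : Matrix (Fin T) (Fin G) ℝ) (X₁ : Matrix (Fin T) (Fin k₁) ℝ)
    (X₂ : Matrix (Fin T) (Fin k₂) ℝ) : Matrix (Fin T) (Fin T) ℝ :=
  (T : ℝ)⁻¹ • (annM (Ybar Y X₁) - annM (Zfull Y X₁ X₂))

noncomputable def LamR (Y : Matrix (Fin T) (Fin G) ℝ) (X₁ : Matrix (Fin T) (Fin k₁) ℝ)
    (X₂ : Matrix (Fin T) (Fin k₂) ℝ) : Matrix (Fin T) (Fin T) ℝ :=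
  (T : ℝ)⁻¹ • annM (Zfull Y X₁ X₂)

/-- `σ̂² = (1/T)(y−Yβ̂)ᵀM₁(y−Yβ̂)`. -/
noncomputable def sigHat2 (y : Fin T → ℝ) (Y : Matrix (Fin T) (Fin G) ℝ)
    (X₁ : Matrix (Fin T) (Fin k₁) ℝ) : ℝ :=
  (T : ℝ)⁻¹ * ((y - Y *ᵥ betaOLS y Y X₁) ⬝ᵥ (M1 X₁ *ᵥ (y - Y *ᵥ betaOLS y Y X₁)))

/-- `σ̃² = (1/T)(y−Yβ̃)ᵀM₁(y−Yβ̃)`. -/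
noncomputable def sigTil2 (y : Fin T → ℝ) (Y : Matrix (Fin T) (Fin G) ℝ)
    (X₁ : Matrix (Fin T) (Fin k₁) ℝ) (X₂ : Matrix (Fin T) (Fin k₂) ℝ) : ℝ :=
  (T : ℝ)⁻¹ * ((y - Y *ᵥ beta2S y Y X₁ X₂) ⬝ᵥ (M1 X₁ *ᵥ (y - Y *ᵥ beta2S y Y X₁ X₂)))

/-- `σ̃₁² = (1/T)(y−Yβ̃)ᵀN₁(y−Yβ̃)`. -/
noncomputable def sigTil1sq (y : Fin T → ℝ) (Y : Matrix (Fin T) (Fin G) ℝ)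
    (X₁ : Matrix (Fin T) (Fin k₁) ℝ) (X₂ : Matrix (Fin T) (Fin k₂) ℝ) : ℝ :=
  (T : ℝ)⁻¹ * ((y - Y *ᵥ beta2S y Y X₁ X₂) ⬝ᵥ (N1 X₁ X₂ *ᵥ (y - Y *ᵥ beta2S y Y X₁ X₂)))

/-- `σ̃₂² = σ̂² − (β̃−β̂)ᵀΔ̂⁻¹(β̃−β̂)`. -/
noncomputable def sigTil2sq (y : Fin T → ℝ) (Y : Matrix (Fin T) (Fin G) ℝ)
    (X₁ : Matrix (Fin T) (Fin k₁) ℝ) (X₂ : Matrix (Fin T) (Fin k₂) ℝ) : ℝ :=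
  sigHat2 y Y X₁ -
    (beta2S y Y X₁ X₂ - betaOLS y Y X₁) ⬝ᵥ
      ((Dhat Y X₁ X₂)⁻¹ *ᵥ (beta2S y Y X₁ X₂ - betaOLS y Y X₁))

/-- The rank condition: `X₁`, `X = [X₁, X₂]`, `[Y, X]` and `[P̄[X]Y, X₁]` all have
full column rank. -/
def RankCond (Y : Matrix (Fin T) (Fin G) ℝ) (X₁ : Matrix (Fin T) (Fin k₁) ℝ)
    (X₂ : Matrix (Fin T) (Fin k₂) ℝ) : Prop :=
  X₁.rank = k₁ ∧ (fromCols X₁ X₂).rank = k₁ + k₂ ∧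
    (fromCols Y (fromCols X₁ X₂)).rank = G + (k₁ + k₂) ∧
    (fromCols (Pm X₁ X₂ * Y) X₁).rank = G + k₁

section Aux

set_option linter.unusedSectionVars false in
lemma aux_inj_of_rank {T : ℕ} {n : Type*} [Fintype n] [DecidableEq n]
    (A : Matrix (Fin T) n ℝ)
    (h : A.rank = Fintype.card n) : Function.Injective A.mulVec := by
  have h2 := LinearMap.finrank_range_add_finrank_ker A.mulVecLin
  rw [Matrix.rank] at h
  rw [h, Module.finrank_fintype_fun_eq_card] at h2
  have hk : LinearMap.ker A.mulVecLin = ⊥ := by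
    rw [← Submodule.finrank_eq_zero (R := ℝ)]
    omega
  have := LinearMap.ker_eq_bot.mp hk
  simpa [Matrix.coe_mulVecLin] using this

lemma aux_ker_of_inj {m n : Type*} [Fintype m] [Fintype n] (A : Matrix m n ℝ)
    (h : Function.Injective A.mulVec)
    {v : n → ℝ} (hv : A *ᵥ v = 0) : v = 0 := by
  apply h; simpa using hv

lemma aux_inj_of_ker {m n : Type*} [Fintype m] [Fintype n] (A : Matrix m n ℝ)
    (h : ∀ v, A *ᵥ v = 0 → v = 0) :
    Function.Injective A.mulVec := by
  intro v w hvw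
  have := h (v - w) (by rw [Matrix.mulVec_sub, hvw, sub_self])
  exact sub_eq_zero.mp this

lemma aux_isUnit_tmul {m n : Type*} [Fintype m] [Fintype n] [DecidableEq n]
    (A : Matrix m n ℝ)
    (h : Function.Injective A.mulVec) : IsUnit (Aᵀ * A) := by
  rw [← Matrix.mulVec_injective_iff_isUnit]
  apply aux_inj_of_ker
  intro v h0
  have h1 : (A *ᵥ v) ⬝ᵥ (A *ᵥ v) = 0 := by
    have : v ⬝ᵥ ((Aᵀ * A) *ᵥ v) = 0 := by rw [h0]; simp
    rwa [← Matrix.mulVec_mulVec, Matrix.dotProduct_mulVec, Matrix.vecMul_transpose] at this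
  exact aux_ker_of_inj A h (dotProduct_self_eq_zero.mp h1)

lemma aux_rank_eq_of_inj {T : ℕ} {n : Type*} [Fintype n] [DecidableEq n]
    (A : Matrix (Fin T) n ℝ)
    (h : Function.Injective A.mulVec) : A.rank = Fintype.card n := by
  have := Matrix.rank_of_isUnit _ (aux_isUnit_tmul A h)
  rw [← Matrix.rank_transpose_mul_self A, this]

lemma aux_elim_zero_left {α β : Type*} {v : α → ℝ} {w : β → ℝ}
    (h : Sum.elim v w = 0) : v = 0 := by
  funext i; exact congrFun h (Sum.inl i)

lemma aux_elim_zero_right {α β : Type*} {v : α → ℝ} {w : β → ℝ}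
    (h : Sum.elim v w = 0) : w = 0 := by
  funext i; exact congrFun h (Sum.inr i)

lemma aux_inj_sub {T : ℕ} {n₁ n₂ : Type*} [Fintype n₁] [Fintype n₂]
    (W : Matrix (Fin T) n₁ ℝ) (C : Matrix (Fin T) n₂ ℝ) (D : Matrix n₂ (Fin T) ℝ)
    (hinj : Function.Injective (fromCols W C).mulVec) :
    Function.Injective (((1 : Matrix (Fin T) (Fin T) ℝ) - C * D) * W).mulVec := by
  apply aux_inj_of_ker
  intro v hv
  have h3 : W *ᵥ v - C *ᵥ (D *ᵥ (W *ᵥ v)) = 0 := by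
    rw [Matrix.sub_mul, Matrix.one_mul, Matrix.sub_mulVec, Matrix.mul_assoc,
      ← Matrix.mulVec_mulVec, ← Matrix.mulVec_mulVec] at hv
    exact hv
  have h2 : fromCols W C *ᵥ Sum.elim v (-(D *ᵥ (W *ᵥ v))) = 0 := by
    rw [Matrix.fromCols_mulVec_sumElim, Matrix.mulVec_neg, ← sub_eq_add_neg]
    exact h3
  exact aux_elim_zero_left (aux_ker_of_inj _ hinj h2)

lemma projM_transpose' {T : ℕ} {n : Type*} [Fintype n] [DecidableEq n]
    (A : Matrix (Fin T) n ℝ) :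
    (projM A)ᵀ = projM A := by
  simp [projM, Matrix.transpose_mul, Matrix.transpose_nonsing_inv, Matrix.mul_assoc]

lemma projM_mul_self {T : ℕ} {n : Type*} [Fintype n] [DecidableEq n]
    (A : Matrix (Fin T) n ℝ) (h : IsUnit (Aᵀ * A)) :
    projM A * A = A := by
  rw [projM, Matrix.mul_assoc, Matrix.mul_assoc,
    Matrix.nonsing_inv_mul _ ((Matrix.isUnit_iff_isUnit_det _).mp h), Matrix.mul_one]

lemma projM_eq_of {T : ℕ} {n : Type*} [Fintype n] [DecidableEq n]
    (C : Matrix (Fin T) n ℝ) (h : IsUnit (Cᵀ * C))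
    (E : Matrix (Fin T) (Fin T) ℝ) (hsym : Eᵀ = E) (hEC : E * C = C)
    (D : Matrix n (Fin T) ℝ) (hED : E = C * D) :
    projM C = E := by
  have h1 : projM C * E = E := by
    rw [hED, ← Matrix.mul_assoc, projM_mul_self C h]
  have h2 : E * projM C = projM C := by
    rw [projM]
    simp only [← Matrix.mul_assoc, hEC]
  have h3 := projM_transpose' C
  calc projM C = (E * projM C)ᵀ := by rw [h2, h3]
    _ = projM C * Eᵀ := by rw [Matrix.transpose_mul, h3]
    _ = E := by rw [hsym, h1]

lemma keyPsi {g t : ℕ} (A₁ A₂ A₃ : Matrix (Fin g) (Fin g) ℝ)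
    (Q R : Matrix (Fin g) (Fin t) ℝ)
    (hA₁ : A₁ = A₂ + A₃) (hA₁s : A₁ᵀ = A₁) (hA₂s : A₂ᵀ = A₂) (hA₃s : A₃ᵀ = A₃)
    (u₁ : IsUnit A₁.det) (u₂ : IsUnit A₂.det) (u₃ : IsUnit A₃.det) :
    (A₂⁻¹ * Q - A₁⁻¹ * (Q + R))ᵀ * (A₁ * (A₃⁻¹ * A₂)) * (A₂⁻¹ * Q - A₁⁻¹ * (Q + R))
      = Qᵀ * (A₂⁻¹ * Q) + Rᵀ * (A₃⁻¹ * R) - (Q + R)ᵀ * (A₁⁻¹ * (Q + R)) := by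
  have i₂ : (A₂⁻¹)ᵀ = A₂⁻¹ := by rw [Matrix.transpose_nonsing_inv, hA₂s]
  have hA₂eq : A₂ = A₁ - A₃ := by rw [hA₁]; abel
  have hA₃eq : A₃ = A₁ - A₂ := by rw [hA₁]; abel
  set Cm := A₂⁻¹ * Q - A₁⁻¹ * (Q + R) with hCm
  have step1 : A₁ * Cm = A₃ * (A₂⁻¹ * Q) - R := by
    rw [hCm, Matrix.mul_sub, Matrix.mul_nonsing_inv_cancel_left _ _ u₁]
    conv_lhs => rw [hA₁]
    rw [Matrix.add_mul, Matrix.mul_nonsing_inv_cancel_left _ _ u₂]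
    abel
  have step2 : A₂ * Cm = A₃ * (A₁⁻¹ * (Q + R)) - R := by
    rw [hCm, Matrix.mul_sub, Matrix.mul_nonsing_inv_cancel_left _ _ u₂]
    conv_lhs => rw [hA₂eq]
    rw [Matrix.sub_mul, Matrix.mul_nonsing_inv_cancel_left _ _ u₁]
    abel
  have step3 : Cmᵀ * (A₁ * (A₃⁻¹ * A₂)) * Cm = (A₁ * Cm)ᵀ * (A₃⁻¹ * (A₂ * Cm)) := by
    rw [Matrix.transpose_mul, hA₁s]
    simp only [Matrix.mul_assoc]
  rw [step3, step1, step2]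
  have f1 : A₃⁻¹ * (A₃ * (A₁⁻¹ * (Q + R)) - R) = A₁⁻¹ * (Q + R) - A₃⁻¹ * R := by
    rw [Matrix.mul_sub, Matrix.nonsing_inv_mul_cancel_left _ _ u₃]
  have g1 : (A₃ * (A₂⁻¹ * Q) - R)ᵀ = Qᵀ * (A₂⁻¹ * A₃) - Rᵀ := by
    rw [Matrix.transpose_sub, Matrix.transpose_mul, Matrix.transpose_mul, i₂, hA₃s]
    simp only [Matrix.mul_assoc]
  rw [f1, g1]
  have e1 : A₃ * (A₁⁻¹ * (Q + R)) = (Q + R) - A₂ * (A₁⁻¹ * (Q + R)) := by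
    conv_lhs => rw [hA₃eq]
    rw [Matrix.sub_mul, Matrix.mul_nonsing_inv_cancel_left _ _ u₁]
  have hT1 : Qᵀ * (A₂⁻¹ * A₃) * (A₁⁻¹ * (Q + R))
      = Qᵀ * (A₂⁻¹ * (Q + R)) - Qᵀ * (A₁⁻¹ * (Q + R)) := by
    rw [Matrix.mul_assoc Qᵀ, Matrix.mul_assoc A₂⁻¹, e1, Matrix.mul_sub,
      Matrix.nonsing_inv_mul_cancel_left _ _ u₂, Matrix.mul_sub]
  have hT2 : Qᵀ * (A₂⁻¹ * A₃) * (A₃⁻¹ * R) = Qᵀ * (A₂⁻¹ * R) := by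
    rw [Matrix.mul_assoc Qᵀ, Matrix.mul_assoc A₂⁻¹, Matrix.mul_nonsing_inv_cancel_left _ _ u₃]
  rw [Matrix.sub_mul, Matrix.mul_sub, Matrix.mul_sub, hT1, hT2]
  simp only [Matrix.transpose_add, Matrix.mul_add, Matrix.add_mul]
  abel

end Aux

/-- **Regression-based formulation.**  Under the rank condition, with `V̂ = MY` and
`Ẑ = [Y, X₁, V̂]` (which has full column rank), the difference between the restricted
and unrestricted residual sums of squares satisfies
`yᵀM̄[Ȳ]y − yᵀM̄[Ẑ]y = T·yᵀΨ₀y = T·(β̃−β̂)ᵀΔ̂⁻¹(β̃−β̂)`; moreover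
`yᵀM̄[Ȳ]y = T·yᵀΛ₄y` and `yᵀM̄[Ẑ]y = T·yᵀΛ₂y`. -/


theorem stmt14 {T G k₁ k₂ : ℕ}
    (hT : 0 < T) (hG : 0 < G) (hk₁ : 0 < k₁) (hk₂ : 0 < k₂)
    (y : Fin T → ℝ) (Y : Matrix (Fin T) (Fin G) ℝ)
    (X₁ : Matrix (Fin T) (Fin k₁) ℝ) (X₂ : Matrix (Fin T) (Fin k₂) ℝ)
    (hrank : RankCond Y X₁ X₂) :
    (fromCols Y (fromCols X₁ (Mm X₁ X₂ * Y))).rank = G + (k₁ + G) ∧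
    y ⬝ᵥ (annM (Ybar Y X₁) *ᵥ y) -
        y ⬝ᵥ (annM (fromCols Y (fromCols X₁ (Mm X₁ X₂ * Y))) *ᵥ y)
      = (T : ℝ) * (y ⬝ᵥ (Psi0 Y X₁ X₂ *ᵥ y)) ∧
    y ⬝ᵥ (annM (Ybar Y X₁) *ᵥ y) -
        y ⬝ᵥ (annM (fromCols Y (fromCols X₁ (Mm X₁ X₂ * Y))) *ᵥ y)
      = (T : ℝ) *
          ((beta2S y Y X₁ X₂ - betaOLS y Y X₁) ⬝ᵥ
            ((Dhat Y X₁ X₂)⁻¹ *ᵥ (beta2S y Y X₁ X₂ - betaOLS y Y X₁))) ∧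
    y ⬝ᵥ (annM (Ybar Y X₁) *ᵥ y) = (T : ℝ) * (y ⬝ᵥ (Lam4 Y X₁ *ᵥ y)) ∧
    y ⬝ᵥ (annM (fromCols Y (fromCols X₁ (Mm X₁ X₂ * Y))) *ᵥ y)
      = (T : ℝ) * (y ⬝ᵥ (Lam2 Y X₁ X₂ *ᵥ y)) := by
  classical
  obtain ⟨hr1, hr2, hr3, hr4⟩ := hrank
  have hTne : (T : ℝ) ≠ 0 := Nat.cast_ne_zero.mpr hT.ne'
  set Xf := fromCols X₁ X₂ with hXfd
  set P₁ := projM X₁ with hP₁d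
  set Pf := projM Xf with hPfd
  set M₁ := (1 : Matrix (Fin T) (Fin T) ℝ) - P₁ with hM₁d
  set Mf := (1 : Matrix (Fin T) (Fin T) ℝ) - Pf with hMfd
  set Nn := Pf - P₁ with hNd
  -- injectivity of basic blocks
  have hX₁i : Function.Injective X₁.mulVec := aux_inj_of_rank _ (by simpa using hr1)
  have hXfi : Function.Injective Xf.mulVec := aux_inj_of_rank _ (by simpa using hr2)
  have hYXi : Function.Injective (fromCols Y Xf).mulVec :=
    aux_inj_of_rank _ (by simpa using hr3)
  have uX₁ : IsUnit (X₁ᵀ * X₁) := aux_isUnit_tmul _ hX₁i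
  have uXf : IsUnit (Xfᵀ * Xf) := aux_isUnit_tmul _ hXfi
  -- basic projection facts
  have hP₁X₁ : P₁ * X₁ = X₁ := by rw [hP₁d]; exact projM_mul_self _ uX₁
  have hPfXf : Pf * Xf = Xf := by rw [hPfd]; exact projM_mul_self _ uXf
  have hP₁t : P₁ᵀ = P₁ := by rw [hP₁d]; exact projM_transpose' _
  have hPft : Pfᵀ = Pf := by rw [hPfd]; exact projM_transpose' _
  have hXfX₁ : Xf * (fromRows (1 : Matrix (Fin k₁) (Fin k₁) ℝ)
      (0 : Matrix (Fin k₂) (Fin k₁) ℝ)) = X₁ := by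
    rw [hXfd, Matrix.fromCols_mul_fromRows, Matrix.mul_one, Matrix.mul_zero, add_zero]
  have hPfX₁ : Pf * X₁ = X₁ := by rw [← hXfX₁, ← Matrix.mul_assoc, hPfXf]
  have hP₁e : P₁ = X₁ * ((X₁ᵀ * X₁)⁻¹ * X₁ᵀ) := by
    rw [hP₁d, show projM X₁ = X₁ * (X₁ᵀ * X₁)⁻¹ * X₁ᵀ from rfl, Matrix.mul_assoc]
  have hPfe : Pf = Xf * ((Xfᵀ * Xf)⁻¹ * Xfᵀ) := by
    rw [hPfd, show projM Xf = Xf * (Xfᵀ * Xf)⁻¹ * Xfᵀ from rfl, Matrix.mul_assoc]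
  have hPfP₁ : Pf * P₁ = P₁ := by rw [hP₁e, ← Matrix.mul_assoc, hPfX₁]
  have hP₁Pf : P₁ * Pf = P₁ := by
    have h := congrArg Matrix.transpose hPfP₁
    rwa [Matrix.transpose_mul, hP₁t, hPft] at h
  have hP₁P₁ : P₁ * P₁ = P₁ := by
    nth_rewrite 2 [hP₁e]
    rw [← Matrix.mul_assoc, hP₁X₁, ← hP₁e]
  have hPfPf : Pf * Pf = Pf := by
    nth_rewrite 2 [hPfe]
    rw [← Matrix.mul_assoc, hPfXf, ← hPfe]
  -- defs in terms of P₁, Pf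
  have hPm : Pm X₁ X₂ = Pf := by rw [hPfd, hXfd]; rfl
  have hM1e : M1 X₁ = M₁ := by rw [hM₁d, hP₁d]; rfl
  have hMme : Mm X₁ X₂ = Mf := by rw [hMfd, hPfd, hXfd]; rfl
  have hM₁Pf : M₁ * Pf = Nn := by
    rw [hM₁d, hNd, Matrix.sub_mul, Matrix.one_mul, hP₁Pf]
  have hN1e : N1 X₁ X₂ = Nn := by
    rw [show N1 X₁ X₂ = M1 X₁ * Pm X₁ X₂ from rfl, hM1e, hPm, hM₁Pf]
  clear_value Xf P₁ Pf M₁ Mf Nn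
  -- algebra of M₁, Mf, Nn
  have hM₁t : M₁ᵀ = M₁ := by rw [hM₁d]; simp [hP₁t]
  have hMft : Mfᵀ = Mf := by rw [hMfd]; simp [hPft]
  have hNnt : Nnᵀ = Nn := by rw [hNd]; simp [hP₁t, hPft]
  have hM₁X₁ : M₁ * X₁ = 0 := by
    rw [hM₁d, Matrix.sub_mul, Matrix.one_mul, hP₁X₁, sub_self]
  have hMfX₁ : Mf * X₁ = 0 := by
    rw [hMfd, Matrix.sub_mul, Matrix.one_mul, hPfX₁, sub_self]
  have hNnX₁ : Nn * X₁ = 0 := by rw [hNd, Matrix.sub_mul, hPfX₁, hP₁X₁, sub_self]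
  have hM₁M₁ : M₁ * M₁ = M₁ := by
    rw [hM₁d]
    simp only [Matrix.sub_mul, Matrix.mul_sub, Matrix.one_mul, Matrix.mul_one, hP₁P₁]
    abel
  have hMfMf : Mf * Mf = Mf := by
    rw [hMfd]
    simp only [Matrix.sub_mul, Matrix.mul_sub, Matrix.one_mul, Matrix.mul_one, hPfPf]
    abel
  have hNnNn : Nn * Nn = Nn := by
    rw [hNd]
    simp only [Matrix.sub_mul, Matrix.mul_sub, hP₁P₁, hPfPf, hPfP₁, hP₁Pf]
    abel
  have hM₁Nn : M₁ * Nn = Nn := by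
    rw [hM₁d, hNd]
    simp only [Matrix.sub_mul, Matrix.mul_sub, Matrix.one_mul, hP₁Pf, hP₁P₁]
    abel
  have hNnM₁ : Nn * M₁ = Nn := by
    rw [hM₁d, hNd]
    simp only [Matrix.sub_mul, Matrix.mul_sub, Matrix.mul_one, hPfP₁, hP₁P₁]
    abel
  have hM₁Mf : M₁ * Mf = Mf := by
    rw [hM₁d, hMfd]
    simp only [Matrix.sub_mul, Matrix.mul_sub, Matrix.one_mul, Matrix.mul_one, hP₁Pf, hP₁P₁]
    abel
  have hMfM₁ : Mf * M₁ = Mf := by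
    rw [hM₁d, hMfd]
    simp only [Matrix.sub_mul, Matrix.mul_sub, Matrix.one_mul, Matrix.mul_one, hPfP₁, hP₁P₁]
    abel
  have hNnMf : Nn * Mf = 0 := by
    rw [hNd, hMfd]
    simp only [Matrix.sub_mul, Matrix.mul_sub, Matrix.mul_one, hPfPf, hP₁Pf]
    abel
  have hMfNn : Mf * Nn = 0 := by
    rw [hNd, hMfd]
    simp only [Matrix.sub_mul, Matrix.mul_sub, Matrix.one_mul, hPfPf, hPfP₁]
    abel
  have hP₁Mf : P₁ * Mf = 0 := by
    rw [hMfd, Matrix.mul_sub, Matrix.mul_one, hP₁Pf, sub_self]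
  have hM₁sum : M₁ = Nn + Mf := by rw [hM₁d, hNd, hMfd]; abel
  have hOne : P₁ + Nn + Mf = 1 := by rw [hNd, hMfd]; abel
  -- the G × · data
  set Q := Yᵀ * Nn with hQd
  set R := Yᵀ * Mf with hRd
  set S := Yᵀ * M₁ with hSd
  set A₁ := S * Y with hA₁d
  set A₂ := Q * Y with hA₂d
  set A₃ := R * Y with hA₃d
  clear_value Q R S A₁ A₂ A₃
  have hQt : Qᵀ = Nn * Y := by
    rw [hQd, Matrix.transpose_mul, hNnt, Matrix.transpose_transpose]
  have hRt : Rᵀ = Mf * Y := by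
    rw [hRd, Matrix.transpose_mul, hMft, Matrix.transpose_transpose]
  have hSt : Sᵀ = M₁ * Y := by
    rw [hSd, Matrix.transpose_mul, hM₁t, Matrix.transpose_transpose]
  have hSQR : S = Q + R := by rw [hSd, hQd, hRd, hM₁sum, Matrix.mul_add]
  have hA₁sum : A₁ = A₂ + A₃ := by rw [hA₁d, hA₂d, hA₃d, hSQR, Matrix.add_mul]
  have hA₁t : A₁ᵀ = A₁ := by
    rw [hA₁d, Matrix.transpose_mul, hSt, hSd, Matrix.mul_assoc]
  have hA₂t : A₂ᵀ = A₂ := by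
    rw [hA₂d, Matrix.transpose_mul, hQt, hQd, Matrix.mul_assoc]
  have hA₃t : A₃ᵀ = A₃ := by
    rw [hA₃d, Matrix.transpose_mul, hRt, hRd, Matrix.mul_assoc]
  -- injectivity of M₁Y, NnY, MfY
  have hM₁Yi : Function.Injective (M₁ * Y).mulVec := by
    have h := aux_inj_sub Y Xf (fromRows ((X₁ᵀ * X₁)⁻¹ * X₁ᵀ)
      (0 : Matrix (Fin k₂) (Fin T) ℝ)) hYXi
    have e : (1 : Matrix (Fin T) (Fin T) ℝ) - Xf * fromRows ((X₁ᵀ * X₁)⁻¹ * X₁ᵀ)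
        (0 : Matrix (Fin k₂) (Fin T) ℝ) = M₁ := by
      rw [hXfd, Matrix.fromCols_mul_fromRows, Matrix.mul_zero, add_zero, ← hP₁e, ← hM₁d]
    rwa [e] at h
  have hMfYi : Function.Injective (Mf * Y).mulVec := by
    have h := aux_inj_sub Y Xf ((Xfᵀ * Xf)⁻¹ * Xfᵀ) hYXi
    have e : (1 : Matrix (Fin T) (Fin T) ℝ) - Xf * ((Xfᵀ * Xf)⁻¹ * Xfᵀ) = Mf := by
      rw [← hPfe, ← hMfd]
    rwa [e] at h
  have hPYi : Function.Injective (fromCols (Pf * Y) X₁).mulVec := by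
    have h := aux_inj_of_rank (fromCols (Pm X₁ X₂ * Y) X₁) (by simpa using hr4)
    rwa [hPm] at h
  have hNnYi : Function.Injective (Nn * Y).mulVec := by
    have h := aux_inj_sub (Pf * Y) X₁ ((X₁ᵀ * X₁)⁻¹ * X₁ᵀ) hPYi
    have e : ((1 : Matrix (Fin T) (Fin T) ℝ) - X₁ * ((X₁ᵀ * X₁)⁻¹ * X₁ᵀ)) * (Pf * Y)
        = Nn * Y := by
      rw [← hP₁e, ← hM₁d, ← Matrix.mul_assoc, hM₁Pf]
    rwa [e] at h
  -- Gram matrices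
  have eA₁ : (M₁ * Y)ᵀ * (M₁ * Y) = A₁ := by
    rw [Matrix.transpose_mul, hM₁t, Matrix.mul_assoc Yᵀ, ← Matrix.mul_assoc M₁, hM₁M₁,
      ← Matrix.mul_assoc, hA₁d, hSd]
  have eA₂ : (Nn * Y)ᵀ * (Nn * Y) = A₂ := by
    rw [Matrix.transpose_mul, hNnt, Matrix.mul_assoc Yᵀ, ← Matrix.mul_assoc Nn, hNnNn,
      ← Matrix.mul_assoc, hA₂d, hQd]
  have eA₃ : (Mf * Y)ᵀ * (Mf * Y) = A₃ := by
    rw [Matrix.transpose_mul, hMft, Matrix.mul_assoc Yᵀ, ← Matrix.mul_assoc Mf, hMfMf,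
      ← Matrix.mul_assoc, hA₃d, hRd]
  have uA₁ : IsUnit A₁.det := by
    have h := aux_isUnit_tmul _ hM₁Yi
    rw [eA₁] at h
    exact (Matrix.isUnit_iff_isUnit_det _).mp h
  have uA₂ : IsUnit A₂.det := by
    have h := aux_isUnit_tmul _ hNnYi
    rw [eA₂] at h
    exact (Matrix.isUnit_iff_isUnit_det _).mp h
  have uA₃ : IsUnit A₃.det := by
    have h := aux_isUnit_tmul _ hMfYi
    rw [eA₃] at h
    exact (Matrix.isUnit_iff_isUnit_det _).mp h
  have iA₁ : (A₁⁻¹)ᵀ = A₁⁻¹ := by rw [Matrix.transpose_nonsing_inv, hA₁t]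
  have iA₂ : (A₂⁻¹)ᵀ = A₂⁻¹ := by rw [Matrix.transpose_nonsing_inv, hA₂t]
  have iA₃ : (A₃⁻¹)ᵀ = A₃⁻¹ := by rw [Matrix.transpose_nonsing_inv, hA₃t]
  have hStt : (M₁ * Y)ᵀ = S := by
    rw [Matrix.transpose_mul, hM₁t, ← hSd]
  have hPSe : projM (M₁ * Y) = Sᵀ * (A₁⁻¹ * S) := by
    rw [show projM (M₁ * Y) = (M₁ * Y) * ((M₁ * Y)ᵀ * (M₁ * Y))⁻¹ * (M₁ * Y)ᵀ from rfl,
      eA₁, hStt, ← hSt, Matrix.mul_assoc]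
  -- invariance facts
  have hM₁Qt : M₁ * Qᵀ = Qᵀ := by rw [hQt, ← Matrix.mul_assoc, hM₁Nn]
  have hM₁Rt : M₁ * Rᵀ = Rᵀ := by rw [hRt, ← Matrix.mul_assoc, hM₁Mf]
  have hM₁St : M₁ * Sᵀ = Sᵀ := by rw [hSt, ← Matrix.mul_assoc, hM₁M₁]
  have hQM₁ : Q * M₁ = Q := by rw [hQd, Matrix.mul_assoc, hNnM₁]
  have hRM₁ : R * M₁ = R := by rw [hRd, Matrix.mul_assoc, hMfM₁]
  have hSM₁ : S * M₁ = S := by rw [hSd, Matrix.mul_assoc, hM₁M₁]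
  have hSX₁ : S * X₁ = 0 := by rw [hSd, Matrix.mul_assoc, hM₁X₁, Matrix.mul_zero]
  have hQX₁ : Q * X₁ = 0 := by rw [hQd, Matrix.mul_assoc, hNnX₁, Matrix.mul_zero]
  have hRX₁ : R * X₁ = 0 := by rw [hRd, Matrix.mul_assoc, hMfX₁, Matrix.mul_zero]
  -- Ybar projector
  have hYbi : Function.Injective (Ybar Y X₁).mulVec := by
    apply aux_inj_of_ker
    intro v hv
    rw [show Ybar Y X₁ = fromCols Y X₁ from rfl, ← Sum.elim_comp_inl_inr v,
      Matrix.fromCols_mulVec_sumElim] at hv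
    have h2 : fromCols Y Xf *ᵥ Sum.elim (v ∘ Sum.inl)
        (Sum.elim (v ∘ Sum.inr) (0 : Fin k₂ → ℝ)) = 0 := by
      rw [Matrix.fromCols_mulVec_sumElim, hXfd, Matrix.fromCols_mulVec_sumElim,
        Matrix.mulVec_zero, add_zero]
      exact hv
    have h3 := aux_ker_of_inj _ hYXi h2
    have ha := aux_elim_zero_left h3
    have hb := aux_elim_zero_left (aux_elim_zero_right h3)
    funext i
    cases i with
    | inl i => exact congrFun ha i
    | inr i => exact congrFun hb i
  have uYb : IsUnit ((Ybar Y X₁)ᵀ * Ybar Y X₁) := aux_isUnit_tmul _ hYbi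
  have hEY1 : (P₁ + Sᵀ * (A₁⁻¹ * S)) * Y = Y := by
    rw [Matrix.add_mul, Matrix.mul_assoc Sᵀ, Matrix.mul_assoc A₁⁻¹, ← hA₁d,
      Matrix.nonsing_inv_mul _ uA₁, Matrix.mul_one, hSt, hM₁d, Matrix.sub_mul,
      Matrix.one_mul]
    abel
  have hEX1 : (P₁ + Sᵀ * (A₁⁻¹ * S)) * X₁ = X₁ := by
    rw [Matrix.add_mul, Matrix.mul_assoc Sᵀ, Matrix.mul_assoc A₁⁻¹, hSX₁,
      Matrix.mul_zero, Matrix.mul_zero, add_zero, hP₁X₁]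
  have hPYbar : projM (Ybar Y X₁) = P₁ + Sᵀ * (A₁⁻¹ * S) := by
    refine projM_eq_of _ uYb _ ?_ ?_
      (fromRows (A₁⁻¹ * S) ((X₁ᵀ * X₁)⁻¹ * X₁ᵀ * (1 - Y * (A₁⁻¹ * S)))) ?_
    · simp [Matrix.transpose_add, hP₁t, Matrix.transpose_mul, iA₁, Matrix.mul_assoc]
    · rw [show Ybar Y X₁ = fromCols Y X₁ from rfl, Matrix.mul_fromCols, hEY1, hEX1]
    · rw [show Ybar Y X₁ = fromCols Y X₁ from rfl, Matrix.fromCols_mul_fromRows]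
      rw [hSt, hM₁d, hP₁e]
      simp only [Matrix.sub_mul, Matrix.mul_sub, Matrix.one_mul, Matrix.mul_one,
        Matrix.mul_assoc]
      abel
  have hAnnYb : annM (Ybar Y X₁) = M₁ - Sᵀ * (A₁⁻¹ * S) := by
    rw [show annM (Ybar Y X₁) = 1 - projM (Ybar Y X₁) from rfl, hPYbar, hM₁d]
    abel
  -- Zhat
  have hZi : Function.Injective (fromCols Y (fromCols X₁ (Mf * Y))).mulVec := by
    apply aux_inj_of_ker
    intro v hv
    rw [← Sum.elim_comp_inl_inr v, Matrix.fromCols_mulVec_sumElim,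
      ← Sum.elim_comp_inl_inr (v ∘ Sum.inr), Matrix.fromCols_mulVec_sumElim] at hv
    set a := v ∘ Sum.inl with had
    set b := (v ∘ Sum.inr) ∘ Sum.inl with hbd
    set c := (v ∘ Sum.inr) ∘ Sum.inr with hcd
    -- hv : Y *ᵥ a + (X₁ *ᵥ b + (Mf * Y) *ᵥ c) = 0
    have hMf0 : (Mf * Y) *ᵥ (a + c) = 0 := by
      have h := congrArg (fun w => Mf *ᵥ w) hv
      simp only [Matrix.mulVec_add, Matrix.mulVec_mulVec, Matrix.mulVec_zero] at h
      rw [← Matrix.mul_assoc, hMfMf] at h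
      rw [show Mf * X₁ = 0 from hMfX₁] at h
      rw [Matrix.mulVec_add]
      simpa [Matrix.zero_mulVec] using h
    have hNn0 : (Nn * Y) *ᵥ a = 0 := by
      have h := congrArg (fun w => Nn *ᵥ w) hv
      simp only [Matrix.mulVec_add, Matrix.mulVec_mulVec, Matrix.mulVec_zero] at h
      rw [← Matrix.mul_assoc, hNnMf] at h
      rw [show Nn * X₁ = 0 from hNnX₁] at h
      simpa [Matrix.zero_mulVec, Matrix.zero_mul] using h
    have ha0 : a = 0 := aux_ker_of_inj _ hNnYi hNn0
    have hac : a + c = 0 := aux_ker_of_inj _ hMfYi hMf0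
    have hc0 : c = 0 := by rwa [ha0, zero_add] at hac
    have hb0 : b = 0 := by
      rw [ha0, hc0, Matrix.mulVec_zero, Matrix.mulVec_zero, zero_add, add_zero] at hv
      exact aux_ker_of_inj _ hX₁i hv
    funext i
    cases i with
    | inl i => exact congrFun ha0 i
    | inr i =>
      cases i with
      | inl i => exact congrFun hb0 i
      | inr i => exact congrFun hc0 i
  have uZ : IsUnit ((fromCols Y (fromCols X₁ (Mf * Y)))ᵀ *
      fromCols Y (fromCols X₁ (Mf * Y))) := aux_isUnit_tmul _ hZi
  have hP₁MfY : P₁ * (Mf * Y) = 0 := by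
    rw [← Matrix.mul_assoc, hP₁Mf, Matrix.zero_mul]
  have hQMfY : Q * (Mf * Y) = 0 := by
    rw [hQd, Matrix.mul_assoc, ← Matrix.mul_assoc Nn, hNnMf, Matrix.zero_mul,
      Matrix.mul_zero]
  have hRMfY : R * (Mf * Y) = A₃ := by
    rw [hRd, Matrix.mul_assoc, ← Matrix.mul_assoc Mf, hMfMf, ← Matrix.mul_assoc, ← hRd,
      ← hA₃d]
  have hEY2 : (P₁ + Qᵀ * (A₂⁻¹ * Q) + Rᵀ * (A₃⁻¹ * R)) * Y = Y := by
    rw [Matrix.add_mul, Matrix.add_mul, Matrix.mul_assoc Qᵀ, Matrix.mul_assoc A₂⁻¹,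
      ← hA₂d, Matrix.nonsing_inv_mul _ uA₂, Matrix.mul_one, Matrix.mul_assoc Rᵀ,
      Matrix.mul_assoc A₃⁻¹, ← hA₃d, Matrix.nonsing_inv_mul _ uA₃, Matrix.mul_one,
      hQt, hRt, ← Matrix.add_mul, ← Matrix.add_mul, hOne, Matrix.one_mul]
  have hEX2 : (P₁ + Qᵀ * (A₂⁻¹ * Q) + Rᵀ * (A₃⁻¹ * R)) * X₁ = X₁ := by
    rw [Matrix.add_mul, Matrix.add_mul, Matrix.mul_assoc Qᵀ, Matrix.mul_assoc A₂⁻¹,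
      hQX₁, Matrix.mul_zero, Matrix.mul_zero, Matrix.mul_assoc Rᵀ, Matrix.mul_assoc A₃⁻¹,
      hRX₁, Matrix.mul_zero, Matrix.mul_zero, add_zero, add_zero, hP₁X₁]
  have hEM2 : (P₁ + Qᵀ * (A₂⁻¹ * Q) + Rᵀ * (A₃⁻¹ * R)) * (Mf * Y) = Mf * Y := by
    rw [Matrix.add_mul, Matrix.add_mul, hP₁MfY, Matrix.mul_assoc Qᵀ, Matrix.mul_assoc A₂⁻¹,
      hQMfY, Matrix.mul_zero, Matrix.mul_zero, Matrix.mul_assoc Rᵀ, Matrix.mul_assoc A₃⁻¹,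
      hRMfY, Matrix.nonsing_inv_mul _ uA₃, Matrix.mul_one, hRt, zero_add, zero_add]
  have hPZ : projM (fromCols Y (fromCols X₁ (Mf * Y)))
      = P₁ + Qᵀ * (A₂⁻¹ * Q) + Rᵀ * (A₃⁻¹ * R) := by
    refine projM_eq_of _ uZ _ ?_ ?_
      (fromRows (A₂⁻¹ * Q) (fromRows ((X₁ᵀ * X₁)⁻¹ * X₁ᵀ * (1 - Y * (A₂⁻¹ * Q)))
        (A₃⁻¹ * R - A₂⁻¹ * Q))) ?_
    · simp [Matrix.transpose_add, hP₁t, Matrix.transpose_mul, iA₂, iA₃, Matrix.mul_assoc]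
    · rw [Matrix.mul_fromCols, Matrix.mul_fromCols, hEY2, hEX2, hEM2]
    · rw [Matrix.fromCols_mul_fromRows, Matrix.fromCols_mul_fromRows]
      rw [hQt, hRt, hNd, hMfd, hP₁e]
      simp only [Matrix.sub_mul, Matrix.mul_sub, Matrix.one_mul, Matrix.mul_one,
        Matrix.mul_assoc]
      abel
  -- Dhat and Psi0
  have hC1e : C1 Y X₁ X₂ = A₂⁻¹ * Q - A₁⁻¹ * S := by
    rw [show C1 Y X₁ X₂ = B2 Y X₁ X₂ - B1 Y X₁ from rfl,
      show B2 Y X₁ X₂ = (Yᵀ * N1 X₁ X₂ * Y)⁻¹ * (Yᵀ * N1 X₁ X₂) from rfl,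
      show B1 Y X₁ = (Yᵀ * M1 X₁ * Y)⁻¹ * (Yᵀ * M1 X₁) from rfl,
      hN1e, hM1e, ← hQd, ← hSd, ← hA₂d, ← hA₁d]
  have hOmIVinv : (OmIV Y X₁ X₂)⁻¹ = (T : ℝ) • A₂⁻¹ := by
    apply Matrix.inv_eq_right_inv
    rw [show OmIV Y X₁ X₂ = (T : ℝ)⁻¹ • (Yᵀ * N1 X₁ X₂ * Y) from rfl, hN1e, ← hQd, ← hA₂d,
      Matrix.smul_mul, Matrix.mul_smul, smul_smul, inv_mul_cancel₀ hTne, one_smul,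
      Matrix.mul_nonsing_inv _ uA₂]
  have hOmLSinv : (OmLS Y X₁)⁻¹ = (T : ℝ) • A₁⁻¹ := by
    apply Matrix.inv_eq_right_inv
    rw [show OmLS Y X₁ = (T : ℝ)⁻¹ • (Yᵀ * M1 X₁ * Y) from rfl, hM1e, ← hSd, ← hA₁d,
      Matrix.smul_mul, Matrix.mul_smul, smul_smul, inv_mul_cancel₀ hTne, one_smul,
      Matrix.mul_nonsing_inv _ uA₁]
  have hA₃eq : A₃ = A₁ - A₂ := by rw [hA₁sum]; abel
  have hDhate : Dhat Y X₁ X₂ = (T : ℝ) • (A₂⁻¹ * (A₃ * A₁⁻¹)) := by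
    rw [show Dhat Y X₁ X₂ = (OmIV Y X₁ X₂)⁻¹ - (OmLS Y X₁)⁻¹ from rfl, hOmIVinv, hOmLSinv,
      ← smul_sub]
    congr 1
    conv_rhs => rw [hA₃eq]
    rw [Matrix.sub_mul, Matrix.mul_sub, Matrix.mul_nonsing_inv _ uA₁, Matrix.mul_one,
      Matrix.nonsing_inv_mul_cancel_left _ _ uA₂]
  have hDinve : (Dhat Y X₁ X₂)⁻¹ = (T : ℝ)⁻¹ • (A₁ * (A₃⁻¹ * A₂)) := by
    apply Matrix.inv_eq_right_inv
    rw [hDhate, Matrix.smul_mul, Matrix.mul_smul, smul_smul, mul_inv_cancel₀ hTne, one_smul]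
    simp only [Matrix.mul_assoc]
    rw [Matrix.nonsing_inv_mul_cancel_left _ _ uA₁, Matrix.mul_nonsing_inv_cancel_left _ _ uA₃,
      Matrix.nonsing_inv_mul _ uA₂]
  have hTPsi : (T : ℝ) • Psi0 Y X₁ X₂
      = Qᵀ * (A₂⁻¹ * Q) + Rᵀ * (A₃⁻¹ * R) - Sᵀ * (A₁⁻¹ * S) := by
    rw [show Psi0 Y X₁ X₂ = (C1 Y X₁ X₂)ᵀ * (Dhat Y X₁ X₂)⁻¹ * C1 Y X₁ X₂ from rfl,
      hC1e, hDinve, hSQR, Matrix.mul_smul, Matrix.smul_mul, smul_smul,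
      mul_inv_cancel₀ hTne, one_smul]
    exact keyPsi A₁ A₂ A₃ Q R hA₁sum hA₁t hA₂t hA₃t uA₁ uA₂ uA₃
  have hAnnZ : annM (fromCols Y (fromCols X₁ (Mf * Y)))
      = M₁ - Sᵀ * (A₁⁻¹ * S) - (T : ℝ) • Psi0 Y X₁ X₂ := by
    rw [show annM (fromCols Y (fromCols X₁ (Mf * Y)))
        = 1 - projM (fromCols Y (fromCols X₁ (Mf * Y))) from rfl, hPZ, hTPsi, hM₁d]
    abel
  -- Λ₄ and Λ₂
  have hLam4e : (T : ℝ) • Lam4 Y X₁ = M₁ - Sᵀ * (A₁⁻¹ * S) := by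
    rw [show Lam4 Y X₁ = (T : ℝ)⁻¹ • (M1 X₁ * annM (M1 X₁ * Y) * M1 X₁) from rfl, hM1e,
      smul_smul, mul_inv_cancel₀ hTne, one_smul,
      show annM (M₁ * Y) = 1 - projM (M₁ * Y) from rfl, hPSe,
      Matrix.mul_sub, Matrix.mul_one, Matrix.sub_mul, hM₁M₁,
      ← Matrix.mul_assoc, hM₁St, Matrix.mul_assoc Sᵀ, Matrix.mul_assoc A₁⁻¹, hSM₁,
      ← Matrix.mul_assoc, Matrix.mul_assoc Sᵀ]
  have sQ : M₁ * (Qᵀ * (A₂⁻¹ * Q)) * M₁ = Qᵀ * (A₂⁻¹ * Q) := by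
    rw [← Matrix.mul_assoc, hM₁Qt, Matrix.mul_assoc Qᵀ, Matrix.mul_assoc A₂⁻¹, hQM₁]
  have sR : M₁ * (Rᵀ * (A₃⁻¹ * R)) * M₁ = Rᵀ * (A₃⁻¹ * R) := by
    rw [← Matrix.mul_assoc, hM₁Rt, Matrix.mul_assoc Rᵀ, Matrix.mul_assoc A₃⁻¹, hRM₁]
  have sS : M₁ * (Sᵀ * (A₁⁻¹ * S)) * M₁ = Sᵀ * (A₁⁻¹ * S) := by
    rw [← Matrix.mul_assoc, hM₁St, Matrix.mul_assoc Sᵀ, Matrix.mul_assoc A₁⁻¹, hSM₁]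
  have hLam2e : (T : ℝ) • Lam2 Y X₁ X₂
      = annM (fromCols Y (fromCols X₁ (Mf * Y))) := by
    rw [show Lam2 Y X₁ X₂
        = M1 X₁ * ((T : ℝ)⁻¹ • annM (M1 X₁ * Y) - Psi0 Y X₁ X₂) * M1 X₁ from rfl, hM1e,
      ← Matrix.smul_mul, ← Matrix.mul_smul, smul_sub, smul_smul, mul_inv_cancel₀ hTne,
      one_smul, hTPsi, show annM (M₁ * Y) = 1 - projM (M₁ * Y) from rfl, hPSe, hAnnZ,
      hTPsi]
    simp only [Matrix.mul_sub, Matrix.sub_mul, Matrix.mul_add, Matrix.add_mul,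
      Matrix.mul_one, Matrix.one_mul, sQ, sR, sS, hM₁M₁]
  -- quadratic-form helpers
  have hbb : beta2S y Y X₁ X₂ - betaOLS y Y X₁ = C1 Y X₁ X₂ *ᵥ y := by
    rw [show beta2S y Y X₁ X₂ = B2 Y X₁ X₂ *ᵥ y from rfl,
      show betaOLS y Y X₁ = B1 Y X₁ *ᵥ y from rfl,
      show C1 Y X₁ X₂ = B2 Y X₁ X₂ - B1 Y X₁ from rfl, Matrix.sub_mulVec]
  have hquad : y ⬝ᵥ (Psi0 Y X₁ X₂ *ᵥ y)
      = (C1 Y X₁ X₂ *ᵥ y) ⬝ᵥ ((Dhat Y X₁ X₂)⁻¹ *ᵥ (C1 Y X₁ X₂ *ᵥ y)) := by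
    rw [show Psi0 Y X₁ X₂ = (C1 Y X₁ X₂)ᵀ * (Dhat Y X₁ X₂)⁻¹ * C1 Y X₁ X₂ from rfl,
      ← Matrix.mulVec_mulVec, ← Matrix.mulVec_mulVec, Matrix.dotProduct_mulVec,
      Matrix.vecMul_transpose]
  have hc2 : y ⬝ᵥ (annM (Ybar Y X₁) *ᵥ y) -
      y ⬝ᵥ (annM (fromCols Y (fromCols X₁ (Mf * Y))) *ᵥ y)
      = (T : ℝ) * (y ⬝ᵥ (Psi0 Y X₁ X₂ *ᵥ y)) := by
    have hdiff : annM (Ybar Y X₁) - annM (fromCols Y (fromCols X₁ (Mf * Y)))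
        = (T : ℝ) • Psi0 Y X₁ X₂ := by
      rw [hAnnYb, hAnnZ]; abel
    rw [← dotProduct_sub, ← Matrix.sub_mulVec, hdiff, Matrix.smul_mulVec,
      dotProduct_smul, smul_eq_mul]
  refine ⟨?_, ?_, ?_, ?_, ?_⟩
  · rw [hMme, aux_rank_eq_of_inj _ hZi]
    simp
  · rw [hMme]
    exact hc2
  · rw [hMme, hc2, hbb, hquad]
  · have h : annM (Ybar Y X₁) = (T : ℝ) • Lam4 Y X₁ := by rw [hLam4e, hAnnYb]
    rw [h, Matrix.smul_mulVec, dotProduct_smul, smul_eq_mul]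
  · rw [hMme, ← hLam2e, Matrix.smul_mulVec, dotProduct_smul, smul_eq_mul]
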